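/- In the constant-product AMM system, if the mempool of σ is empty, then MEV equals the arbitrage value extractable(σ) = (√(pr₀·r₀) − √(pr₁·r₁))², where r₀, r₁ are the AMM reserves and pr₀, pr₁ the positive token prices. -/

import Mathlib

open scoped NNReal

/-! A constant-product AMM over two token types τ₀, τ₁ with fixed positive
prices pr₀, pr₁. A swap sending `v > 0` units of token τ returns
`v · r' / (r + v)` units of the other token, where `r`, `r'` are the input and
output reserves, so the product of reserves is invariant. Honest swaps come
from the mempool and carry a minimum-output constraint `vmin`; the adversary
(with unbounded funds) can craft arbitrary swaps. -/

inductive Participant where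
  | Hon : String → Participant
  | Adv : Participant
deriving DecidableEq

inductive Token where
  | τ₀ : Token
  | τ₁ : Token
deriving DecidableEq

/-- The other token type. -/
def Token.other : Token → Token
  | .τ₀ => .τ₁
  | .τ₁ => .τ₀

abbrev TxId := ℕ

/-- A `swap` transaction: participant `P` sends `v > 0` units of token `τ`,
requiring at least `vmin` units of the other token in exchange. -/
structure Tx where
  P : Participant
  v : ℝ
  v_pos : 0 < v
  τ : Token
  vmin : ℝ

/-- The honest part of the system state: AMM reserves `bal`, cumulative honest
wallet `wal`, and the mempool. -/
structure AMMState where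
  bal : Token → ℝ≥0
  wal : Token → ℝ≥0
  mempool : List (TxId × Tx)

/-- System state: adversary wallet plus honest state. -/
structure AMMSys where
  Δ : Token → ℝ
  s : AMMState

/-- Semantics of a swap of `v` units of `τin` by `P` with minimum output `vmin`. -/
noncomputable def swapSem (P : Participant) (v : ℝ) (τin : Token) (vmin : ℝ)
    (σ : AMMSys) : Option AMMSys :=
  let τout := τin.other
  let rin : ℝ := σ.s.bal τin
  let rout : ℝ := σ.s.bal τout
  let x : ℝ := v * rout / (rin + v)
  if 0 < v ∧ (P = .Adv ∨ v ≤ (σ.s.wal τin : ℝ)) ∧ vmin ≤ x ∧ x < rout then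
    some { Δ := if P = .Adv
                then fun τ => σ.Δ τ + (if τ = τout then x else 0)
                                    - (if τ = τin then v else 0)
                else σ.Δ
         , s := { bal := fun τ => if τ = τin then σ.s.bal τin + v.toNNReal
                                  else σ.s.bal τout - x.toNNReal
                , wal := if P = .Adv then σ.s.wal
                         else fun τ => σ.s.wal τ + (if τ = τout then x.toNNReal else 0)
                                               - (if τ = τin then v.toNNReal else 0)
                , mempool := σ.s.mempool } }
  else none

/-- Adversarial moves: craft an adversary-signed swap, or execute a mempool
transaction. -/
inductive Move where
  | adv : (v : ℝ) → 0 < v → (τ : Token) → (vmin : ℝ) → Move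
  | mempool : TxId → Move

/-- Semantics of adversarial moves. A successfully executed mempool transaction
is removed from the mempool. -/
noncomputable def semMove (σ : AMMSys) : Move → Option AMMSys
  | .adv v _ τ vmin => swapSem .Adv v τ vmin σ
  | .mempool id =>
    match σ.s.mempool.find? (fun p => p.1 == id) with
    | none => none
    | some (_, tx) =>
      match swapSem tx.P tx.v tx.τ tx.vmin σ with
      | none => none
      | some σ' =>
        some { Δ := σ'.Δ
             , s := { bal := σ'.s.bal, wal := σ'.s.wal
                    , mempool := σ.s.mempool.filter (fun p => p.1 != id) } }

/-- Composed effect of a list of moves (failing moves are skipped). -/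
noncomputable def semMoves (σ : AMMSys) : List Move → AMMSys
  | [] => σ
  | m :: ms =>
    match semMove σ m with
    | none => semMoves σ ms
    | some σ' => semMoves σ' ms

/-- Adversarial gain of a list of moves, at token prices `pr₀`, `pr₁`. -/
noncomputable def gainMoves (pr₀ pr₁ : ℝ) (σ : AMMSys) (tr : List Move) : ℝ :=
  pr₀ * ((semMoves σ tr).Δ .τ₀ - σ.Δ .τ₀) + pr₁ * ((semMoves σ tr).Δ .τ₁ - σ.Δ .τ₁)

/-- Maximal extractable value. -/
structure MEV (pr₀ pr₁ : ℝ) (σ : AMMSys) (v : ℝ) : Prop where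
  trace_reaches_v : ∃ tr, gainMoves pr₀ pr₁ σ tr = v
  other_traces_worse : ∀ tr, gainMoves pr₀ pr₁ σ tr ≤ v

/-- Least upper bound of the extractable values. -/
structure MEVsup (pr₀ pr₁ : ℝ) (σ : AMMSys) (v : ℝ) : Prop where
  traces_approx : ∀ ε : ℝ, 0 < ε → ∃ tr, v ≤ gainMoves pr₀ pr₁ σ tr + ε
  other_traces_worse : ∀ tr, gainMoves pr₀ pr₁ σ tr ≤ v

/-- Value extractable by rebalancing the AMM (arbitrage). -/
noncomputable def extractable (pr₀ pr₁ : ℝ) (σ : AMMSys) : ℝ :=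
  (Real.sqrt (pr₀ * (σ.s.bal .τ₀ : ℝ)) - Real.sqrt (pr₁ * (σ.s.bal .τ₁ : ℝ)))^2

lemma Token.other_ne (τ : Token) : τ.other ≠ τ := by cases τ <;> simp [Token.other]

lemma Token.eq_other {τ τin : Token} (h : τ ≠ τin) : τ = τin.other := by
  cases τ <;> cases τin <;> simp_all [Token.other]

lemma swapSem_adv_inv {σ σ' : AMMSys} {v vmin : ℝ} {τin : Token}
    (h : swapSem .Adv v τin vmin σ = some σ')
    (hin : 0 < (σ.s.bal τin : ℝ)) (hout : 0 < (σ.s.bal τin.other : ℝ)) :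
    σ'.s.mempool = σ.s.mempool ∧
    0 < (σ'.s.bal τin : ℝ) ∧ 0 < (σ'.s.bal τin.other : ℝ) ∧
    (σ'.s.bal τin : ℝ) * (σ'.s.bal τin.other : ℝ)
      = (σ.s.bal τin : ℝ) * (σ.s.bal τin.other : ℝ) ∧
    (∀ τ, σ'.Δ τ + (σ'.s.bal τ : ℝ) = σ.Δ τ + (σ.s.bal τ : ℝ)) := by
  simp only [swapSem, eq_self_iff_true, if_true, true_or, true_and] at h
  set x : ℝ := v * (σ.s.bal τin.other : ℝ) / ((σ.s.bal τin : ℝ) + v) with hxdef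
  split at h
  case isFalse => exact absurd h (by simp)
  case isTrue hc =>
    obtain ⟨hv, hvmin, hxlt⟩ := hc
    injection h with h
    subst h
    have hxnn : 0 ≤ x := by
      rw [hxdef]; positivity
    have hvcoe : ((v.toNNReal : ℝ)) = v := Real.coe_toNNReal _ hv.le
    have hxle : x.toNNReal ≤ σ.s.bal τin.other := by
      rw [← NNReal.coe_le_coe, Real.coe_toNNReal _ hxnn]; exact hxlt.le
    have hbin : ((σ.s.bal τin + v.toNNReal : ℝ≥0) : ℝ) = (σ.s.bal τin : ℝ) + v := by
      push_cast [hvcoe]; ring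
    have hbout : ((σ.s.bal τin.other - x.toNNReal : ℝ≥0) : ℝ)
        = (σ.s.bal τin.other : ℝ) - x := by
      rw [NNReal.coe_sub hxle, Real.coe_toNNReal _ hxnn]
    have hne : τin.other ≠ τin := Token.other_ne τin
    refine ⟨rfl, ?_, ?_, ?_, ?_⟩
    · simp only [if_pos rfl, eq_self_iff_true, if_true, hbin]; linarith
    · simp only [if_neg hne, hbout]; linarith
    · simp only [if_pos rfl, eq_self_iff_true, if_true, if_neg hne, hbin, hbout]
      rw [hxdef]
      field_simp
      ring
    · intro τ
      rcases eq_or_ne τ τin with rfl | hτ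
      · simp only [if_pos rfl, eq_self_iff_true, if_true, if_neg hne.symm, hbin]
        ring
      · have hτo : τ = τin.other := Token.eq_other hτ
        subst hτo
        simp only [if_neg hτ, eq_self_iff_true, if_true, hbout]
        ring
/-- Invariant preserved along adversarial traces from σ. -/
def AMMInv (σ σ' : AMMSys) : Prop :=
  σ'.s.mempool = σ.s.mempool ∧
  0 < (σ'.s.bal .τ₀ : ℝ) ∧ 0 < (σ'.s.bal .τ₁ : ℝ) ∧
  (σ'.s.bal .τ₀ : ℝ) * (σ'.s.bal .τ₁ : ℝ)
    = (σ.s.bal .τ₀ : ℝ) * (σ.s.bal .τ₁ : ℝ) ∧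
  (∀ τ, σ'.Δ τ + (σ'.s.bal τ : ℝ) = σ.Δ τ + (σ.s.bal τ : ℝ))

lemma inv_semMoves (σ : AMMSys) (hmp : σ.s.mempool = [])
    (tr : List Move) :
    ∀ σ', AMMInv σ σ' → AMMInv σ (semMoves σ' tr) := by
  induction tr with
  | nil => intro σ' h; exact h
  | cons m ms ih =>
    intro σ' h
    obtain ⟨h1, h2, h3, h4, h5⟩ := h
    show AMMInv σ (semMoves σ' (m :: ms))
    rw [semMoves]
    rcases hsm : semMove σ' m with _ | σ''
    · exact ih σ' ⟨h1, h2, h3, h4, h5⟩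
    · refine ih σ'' ?_
      rcases m with ⟨v, hv, τ, vmin⟩ | id
      · simp only [semMove] at hsm
        have hin : 0 < (σ'.s.bal τ : ℝ) := by cases τ <;> assumption
        have hout : 0 < (σ'.s.bal τ.other : ℝ) := by cases τ <;> simpa [Token.other]
        obtain ⟨m1, b1, b2, b3, b4⟩ := swapSem_adv_inv hsm hin hout
        refine ⟨m1.trans h1, ?_, ?_, ?_, fun τ' => (b4 τ').trans (h5 τ')⟩
        · cases τ <;> first | exact b1 | exact (by simpa [Token.other] using b2)
        · cases τ <;> first | exact b2 | exact (by simpa [Token.other] using b1)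
        · cases τ
          · exact b3.trans h4
          · simp only [Token.other] at b3
            linear_combination b3 + h4
      · exfalso
        simp only [semMove, h1, hmp, List.find?] at hsm
        cases hsm
lemma amgm_bound {pr₀ pr₁ r₀ r₁ a b : ℝ}
    (hpr₀ : 0 < pr₀) (hpr₁ : 0 < pr₁) (ha : 0 < a) (hb : 0 < b)
    (hr₀ : 0 < r₀) (hr₁ : 0 < r₁) (hab : a * b = r₀ * r₁) :
    pr₀ * (r₀ - a) + pr₁ * (r₁ - b)
      ≤ (Real.sqrt (pr₀ * r₀) - Real.sqrt (pr₁ * r₁))^2 := by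
  set s := Real.sqrt (pr₀ * r₀) with hs
  set t := Real.sqrt (pr₁ * r₁) with ht
  set u := Real.sqrt (pr₀ * a) with hu
  set w := Real.sqrt (pr₁ * b) with hw
  have hs2 : s ^ 2 = pr₀ * r₀ := Real.sq_sqrt (by positivity)
  have ht2 : t ^ 2 = pr₁ * r₁ := Real.sq_sqrt (by positivity)
  have hu2 : u ^ 2 = pr₀ * a := Real.sq_sqrt (by positivity)
  have hw2 : w ^ 2 = pr₁ * b := Real.sq_sqrt (by positivity)
  have hst : s * t = u * w := by
    rw [hs, ht, hu, hw, ← Real.sqrt_mul (by positivity), ← Real.sqrt_mul (by positivity)]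
    congr 1
    linear_combination -pr₀ * pr₁ * hab
  nlinarith [sq_nonneg (u - w)]

lemma gain_single_swap (pr₀ pr₁ : ℝ) (σ : AMMSys) (v : ℝ) (hv : 0 < v) (τin : Token)
    (hin : 0 < (σ.s.bal τin : ℝ)) (hout : 0 < (σ.s.bal τin.other : ℝ)) :
    ∃ σ', semMove σ (Move.adv v hv τin 0) = some σ' ∧
      σ'.Δ τin = σ.Δ τin - v ∧
      σ'.Δ τin.other = σ.Δ τin.other
        + v * (σ.s.bal τin.other : ℝ) / ((σ.s.bal τin : ℝ) + v) := by
  set x : ℝ := v * (σ.s.bal τin.other : ℝ) / ((σ.s.bal τin : ℝ) + v) with hxdef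
  have hxnn : 0 ≤ x := by rw [hxdef]; positivity
  have hxlt : x < (σ.s.bal τin.other : ℝ) := by
    rw [hxdef, div_lt_iff₀ (by linarith)]
    nlinarith
  have hne : τin.other ≠ τin := Token.other_ne τin
  refine ⟨{ Δ := fun τ => σ.Δ τ + (if τ = τin.other then x else 0)
                  - (if τ = τin then v else 0),
            s := { bal := fun τ => if τ = τin then σ.s.bal τin + v.toNNReal
                          else σ.s.bal τin.other - x.toNNReal,
                   wal := σ.s.wal, mempool := σ.s.mempool } }, ?_, ?_, ?_⟩
  · simp only [semMove, swapSem, eq_self_iff_true, if_true, true_or, true_and]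
    rw [if_pos ⟨hv, hxnn, hxlt⟩]
  · simp only [if_pos rfl, eq_self_iff_true, if_true, if_neg hne.symm]
    ring
  · simp only [if_pos rfl, eq_self_iff_true, if_true, if_neg hne]
    ring
/-- If the mempool is empty, the MEV of the constant-product AMM is exactly
the arbitrage value `(√(pr₀·r₀) − √(pr₁·r₁))²`. -/
theorem MEV_empty_mempool (pr₀ pr₁ : ℝ) (hpr₀ : 0 < pr₀) (hpr₁ : 0 < pr₁)
    (σ : AMMSys) (hmp : σ.s.mempool = [])
    (hr₀ : 0 < σ.s.bal .τ₀) (hr₁ : 0 < σ.s.bal .τ₁) :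
    MEV pr₀ pr₁ σ (extractable pr₀ pr₁ σ) := by
  have hR₀ : 0 < (σ.s.bal .τ₀ : ℝ) := by exact_mod_cast hr₀
  have hR₁ : 0 < (σ.s.bal .τ₁ : ℝ) := by exact_mod_cast hr₁
  set r₀ : ℝ := (σ.s.bal .τ₀ : ℝ) with hr0def
  set r₁ : ℝ := (σ.s.bal .τ₁ : ℝ) with hr1def
  constructor
  · -- existence of an optimal trace
    rcases lt_trichotomy (pr₀ * r₀) (pr₁ * r₁) with hlt | heq | hgt
    · -- swap τ₀ for τ₁
      set a : ℝ := Real.sqrt (pr₁ * (r₀ * r₁) / pr₀) with hadef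
      have ha : 0 < a := Real.sqrt_pos.2 (by positivity)
      have ha2 : a ^ 2 = pr₁ * (r₀ * r₁) / pr₀ := Real.sq_sqrt (by positivity)
      have h1 : pr₀ * a ^ 2 = pr₁ * (r₀ * r₁) := by
        rw [ha2]; field_simp
      have hv : 0 < a - r₀ := by
        have h2 : pr₀ * r₀ ^ 2 < pr₀ * a ^ 2 := by rw [h1]; nlinarith
        have h3 : r₀ ^ 2 < a ^ 2 := lt_of_mul_lt_mul_left h2 hpr₀.le
        have h4 : r₀ < a := lt_of_pow_lt_pow_left₀ 2 ha.le h3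
        linarith
      have hpa : pr₀ * a = Real.sqrt (pr₀ * r₀) * Real.sqrt (pr₁ * r₁) := by
        rw [← Real.sqrt_mul (by positivity) (pr₁ * r₁),
          show (pr₀ * r₀) * (pr₁ * r₁) = pr₀ ^ 2 * (pr₁ * (r₀ * r₁) / pr₀) by
            field_simp,
          Real.sqrt_mul (by positivity), Real.sqrt_sq hpr₀.le, hadef]
      obtain ⟨σ', hsm, hΔ0, hΔ1⟩ :=
        gain_single_swap pr₀ pr₁ σ (a - r₀) hv .τ₀ hR₀ hR₁
      refine ⟨[Move.adv (a - r₀) hv .τ₀ 0], ?_⟩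
      have hsem : semMoves σ [Move.adv (a - r₀) hv .τ₀ 0] = σ' := by
        rw [semMoves, hsm]
        rfl
      rw [gainMoves, hsem]
      have hΔ1' : σ'.Δ .τ₁ = σ.Δ .τ₁ + (a - r₀) * r₁ / (r₀ + (a - r₀)) := hΔ1
      rw [hΔ0, hΔ1', extractable, ← hr0def, ← hr1def, sub_sq,
        Real.sq_sqrt (by positivity : (0:ℝ) ≤ pr₀ * r₀),
        Real.sq_sqrt (by positivity : (0:ℝ) ≤ pr₁ * r₁), mul_assoc 2, ← hpa]
      have haa : r₀ + (a - r₀) = a := by ring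
      rw [haa]
      field_simp
      linear_combination h1
    · -- already balanced : empty trace
      refine ⟨[], ?_⟩
      simp only [gainMoves, semMoves, sub_self, mul_zero, add_zero, zero_add]
      rw [extractable, ← hr0def, ← hr1def, heq, sub_self]
      ring
    · -- swap τ₁ for τ₀
      set a : ℝ := Real.sqrt (pr₀ * (r₀ * r₁) / pr₁) with hadef
      have ha : 0 < a := Real.sqrt_pos.2 (by positivity)
      have ha2 : a ^ 2 = pr₀ * (r₀ * r₁) / pr₁ := Real.sq_sqrt (by positivity)
      have h1 : pr₁ * a ^ 2 = pr₀ * (r₀ * r₁) := by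
        rw [ha2]; field_simp
      have hv : 0 < a - r₁ := by
        have h2 : pr₁ * r₁ ^ 2 < pr₁ * a ^ 2 := by rw [h1]; nlinarith
        have h3 : r₁ ^ 2 < a ^ 2 := lt_of_mul_lt_mul_left h2 hpr₁.le
        have h4 : r₁ < a := lt_of_pow_lt_pow_left₀ 2 ha.le h3
        linarith
      have hpa : pr₁ * a = Real.sqrt (pr₀ * r₀) * Real.sqrt (pr₁ * r₁) := by
        rw [← Real.sqrt_mul (by positivity) (pr₁ * r₁),
          show (pr₀ * r₀) * (pr₁ * r₁) = pr₁ ^ 2 * (pr₀ * (r₀ * r₁) / pr₁) by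
            field_simp,
          Real.sqrt_mul (by positivity), Real.sqrt_sq hpr₁.le, hadef]
      obtain ⟨σ', hsm, hΔ1, hΔ0⟩ :=
        gain_single_swap pr₀ pr₁ σ (a - r₁) hv .τ₁ hR₁ hR₀
      refine ⟨[Move.adv (a - r₁) hv .τ₁ 0], ?_⟩
      have hsem : semMoves σ [Move.adv (a - r₁) hv .τ₁ 0] = σ' := by
        rw [semMoves, hsm]
        rfl
      rw [gainMoves, hsem]
      have hΔ0' : σ'.Δ .τ₀ = σ.Δ .τ₀ + (a - r₁) * r₀ / (r₁ + (a - r₁)) := hΔ0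
      rw [hΔ0', hΔ1, extractable, ← hr0def, ← hr1def, sub_sq,
        Real.sq_sqrt (by positivity : (0:ℝ) ≤ pr₀ * r₀),
        Real.sq_sqrt (by positivity : (0:ℝ) ≤ pr₁ * r₁), mul_assoc 2, ← hpa]
      have haa : r₁ + (a - r₁) = a := by ring
      rw [haa]
      field_simp
      linear_combination h1
  · -- upper bound
    intro tr
    have hInv := inv_semMoves σ hmp tr σ ⟨rfl, hR₀, hR₁, rfl, fun τ => rfl⟩
    obtain ⟨-, h2, h3, h4, h5⟩ := hInv
    have e0 := h5 .τ₀
    have e1 := h5 .τ₁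
    rw [← hr0def] at e0
    rw [← hr1def] at e1
    have := amgm_bound hpr₀ hpr₁ h2 h3 hR₀ hR₁ h4
    have f0 : (semMoves σ tr).Δ .τ₀ - σ.Δ .τ₀
        = r₀ - ((semMoves σ tr).s.bal .τ₀ : ℝ) := by linarith
    have f1 : (semMoves σ tr).Δ .τ₁ - σ.Δ .τ₁
        = r₁ - ((semMoves σ tr).s.bal .τ₁ : ℝ) := by linarith
    rw [gainMoves, extractable, ← hr0def, ← hr1def, f0, f1]
    exact this
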